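/- Let 0 ≤ t ≤ 1. The joint point spectra of T and Δ_t(T) coincide: for every λ = (λ_1, …, λ_d) ∈ ℂ^d, there exists a nonzero vector x ∈ H with T_i x = λ_i x for all i ∈ {1, …, d} if and only if there exists a nonzero vector y ∈ H with P^t V_i P^{1−t} y = λ_i y for all i ∈ {1, …, d}. -/

import Mathlib

open scoped NNReal

section AluthgeAux

variable {H : Type*} [NormedAddCommGroup H] [InnerProductSpace ℂ H] [CompleteSpace H]

private lemma selfAdjoint_inner_move {A : H →L[ℂ] H} (hA : IsSelfAdjoint A) (x y : H) :
    (inner ℂ (A x) y : ℂ) = inner ℂ x (A y) := by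
  rw [ContinuousLinearMap.isSelfAdjoint_iff'] at hA
  conv_lhs => rw [← hA]
  exact ContinuousLinearMap.adjoint_inner_left A y x

private lemma rpow_one' (P : H →L[ℂ] H) (hP : 0 ≤ P) : CFC.rpow P 1 = P :=
  CFC.rpow_one P hP

private lemma rpow_zero' (P : H →L[ℂ] H) (hP : 0 ≤ P) : CFC.rpow P 0 = 1 :=
  CFC.rpow_zero P hP

private lemma rpow_add_of_nonneg (P : H →L[ℂ] H) (hP : 0 ≤ P) {x y : ℝ}
    (hx : 0 ≤ x) (hy : 0 ≤ y) :
    CFC.rpow P x * CFC.rpow P y = CFC.rpow P (x + y) := by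
  have hdef : ∀ r : ℝ, CFC.rpow P r = cfc (fun z : ℝ≥0 => z ^ r) P := fun _ => rfl
  have hfx : ContinuousOn (fun z : ℝ≥0 => z ^ x) (spectrum ℝ≥0 P) :=
    NNReal.continuousOn_rpow_const (Or.inr hx)
  have hfy : ContinuousOn (fun z : ℝ≥0 => z ^ y) (spectrum ℝ≥0 P) :=
    NNReal.continuousOn_rpow_const (Or.inr hy)
  rw [hdef, hdef, hdef,
    ← cfc_mul (fun z : ℝ≥0 => z ^ x) (fun z : ℝ≥0 => z ^ y) P hfx hfy]
  apply cfc_congr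
  intro z _
  rcases eq_or_ne z 0 with rfl | hz
  · rcases eq_or_ne x 0 with rfl | hx0
    · simp
    · show (0:ℝ≥0) ^ x * (0:ℝ≥0) ^ y = (0:ℝ≥0) ^ (x + y)
      rw [NNReal.zero_rpow hx0, zero_mul, NNReal.zero_rpow (by positivity)]
  · exact (NNReal.rpow_add hz x y).symm

private lemma rpow_self_adjoint (P : H →L[ℂ] H) (s : ℝ) :
    IsSelfAdjoint (CFC.rpow P s) :=
  IsSelfAdjoint.of_nonneg (CFC.rpow_nonneg (a := P) (y := s))

/-- If `P x = 0` and `0 < s`, then `P ^ s x = 0`. -/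
private lemma rpow_apply_eq_zero (P : H →L[ℂ] H) (hP : 0 ≤ P) :
    ∀ n : ℕ, ∀ s : ℝ, 0 < s → 1 ≤ 2 ^ n * s → ∀ x : H, P x = 0 → CFC.rpow P s x = 0 := by
  intro n
  induction n with
  | zero =>
    intro s hs h1 x hx
    rw [pow_zero, one_mul] at h1
    have key : CFC.rpow P (s - 1) * CFC.rpow P 1 = CFC.rpow P s := by
      rw [rpow_add_of_nonneg P hP (by linarith) zero_le_one, sub_add_cancel]
    rw [← key, ContinuousLinearMap.mul_apply, rpow_one' P hP, hx, map_zero]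
  | succ n ih =>
    intro s hs h1 x hx
    have h2s : CFC.rpow P (s + s) x = 0 := by
      refine ih (s + s) (by linarith) ?_ x hx
      rw [pow_succ] at h1
      nlinarith [pow_pos (zero_lt_two (α := ℝ)) n]
    have hcomp : CFC.rpow P s (CFC.rpow P s x) = 0 := by
      rw [← ContinuousLinearMap.mul_apply, rpow_add_of_nonneg P hP hs.le hs.le]
      exact h2s
    have hinner : (inner ℂ (CFC.rpow P s x) (CFC.rpow P s x) : ℂ) = 0 := by
      rw [selfAdjoint_inner_move (rpow_self_adjoint P s), hcomp, inner_zero_right]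
    exact inner_self_eq_zero.mp hinner

private lemma rpow_apply_eq_zero' (P : H →L[ℂ] H) (hP : 0 ≤ P) {s : ℝ} (hs : 0 < s)
    {x : H} (hx : P x = 0) : CFC.rpow P s x = 0 := by
  obtain ⟨n, hn⟩ := exists_nat_gt (1 / s)
  have h2 : (n : ℝ) ≤ 2 ^ n := by exact_mod_cast (Nat.lt_two_pow_self (n := n)).le
  refine rpow_apply_eq_zero P hP n s hs ?_ x hx
  have : 1 / s < 2 ^ n := lt_of_lt_of_le hn h2
  rw [div_lt_iff₀ hs] at this
  nlinarith

/-- If `P ^ s x = 0` with `0 < s ≤ 1`, then `P x = 0`. -/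
private lemma eq_zero_of_rpow_apply_eq_zero (P : H →L[ℂ] H) (hP : 0 ≤ P) {s : ℝ}
    (hs : 0 < s) (hs1 : s ≤ 1) {x : H} (hx : CFC.rpow P s x = 0) : P x = 0 := by
  have key : CFC.rpow P (1 - s) * CFC.rpow P s = CFC.rpow P 1 := by
    rw [rpow_add_of_nonneg P hP (by linarith) hs.le, sub_add_cancel]
  rw [rpow_one' P hP] at key
  rw [← key, ContinuousLinearMap.mul_apply, hx, map_zero]

end AluthgeAux

/-- For `0 ≤ t ≤ 1`: the joint point spectra of `T` and `Δₜ(T)` coincide. -/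
theorem point_spectrum_of_spherical_aluthge
    {H : Type*} [NormedAddCommGroup H] [InnerProductSpace ℂ H] [CompleteSpace H]
    {d : ℕ} (hd : 1 ≤ d) (T V : Fin d → H →L[ℂ] H) (P : H →L[ℂ] H)
    (hcomm : ∀ i j, T i * T j = T j * T i)
    (hPpos : 0 ≤ P)
    (hP2 : P * P = ∑ i, star (T i) * T i)
    (hpolar : ∀ i, T i = V i * P)
    (hproj : ∑ i, star (V i) * V i =
      ((LinearMap.ker (P : H →ₗ[ℂ] H))ᗮ).subtypeL.comp
        (Submodule.orthogonalProjectionOnto (LinearMap.ker (P : H →ₗ[ℂ] H))ᗮ))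
    (t : ℝ) (ht0 : 0 ≤ t) (ht1 : t ≤ 1) (lam : Fin d → ℂ) :
    (∃ x : H, x ≠ 0 ∧ ∀ i, T i x = lam i • x) ↔
      (∃ y : H, y ≠ 0 ∧ ∀ i, (CFC.rpow P t * V i * CFC.rpow P (1 - t)) y = lam i • y) := by
  have hT_apply : ∀ i (z : H), T i z = V i (P z) := fun i z => by
    rw [hpolar i]; rfl
  -- `P^{1-t} ∘ P^t = P`
  have hQQ : ∀ z : H, CFC.rpow P (1 - t) (CFC.rpow P t z) = P z := fun z => by
    rw [← ContinuousLinearMap.mul_apply, rpow_add_of_nonneg P hPpos (by linarith) ht0,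
      sub_add_cancel, rpow_one' P hPpos]
  -- from `P x = 0` we get `V i x = 0`
  have hVker : ∀ (x : H), P x = 0 → ∀ i, V i x = 0 := by
    intro x hx i
    have hmem : x ∈ ((LinearMap.ker (P : H →ₗ[ℂ] H))ᗮ)ᗮ :=
      Submodule.le_orthogonal_orthogonal _ (LinearMap.mem_ker.mpr hx)
    have hproj0 : Submodule.orthogonalProjectionOnto (LinearMap.ker (P : H →ₗ[ℂ] H))ᗮ x = 0 :=
      Submodule.orthogonalProjectionOnto_eq_zero_iff.mpr hmem
    have hsum : (∑ j, star (V j) * V j) x = 0 := by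
      rw [hproj]
      simp [hproj0]
    have hsum' : ∑ j, (inner ℂ (V j x) (V j x) : ℂ) = 0 := by
      have := congrArg (fun z => (inner ℂ z x : ℂ)) hsum
      simp only [inner_zero_left] at this
      rw [← this, ContinuousLinearMap.sum_apply, sum_inner]
      refine Finset.sum_congr rfl fun j _ => ?_
      rw [ContinuousLinearMap.mul_apply, ContinuousLinearMap.star_eq_adjoint]
      exact (ContinuousLinearMap.adjoint_inner_left (V j) x (V j x)).symm
    have hsum'' : ∑ j, (‖V j x‖ : ℝ) ^ 2 = 0 := by
      have : ((∑ j, (‖V j x‖ : ℝ) ^ 2 : ℝ) : ℂ) = 0 := by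
        push_cast
        rw [← hsum']
        exact Finset.sum_congr rfl fun j _ => (inner_self_eq_norm_sq_to_K (V j x)).symm
      exact_mod_cast this
    have := (Finset.sum_eq_zero_iff_of_nonneg
      (fun j _ => sq_nonneg (‖V j x‖))).mp hsum'' i (Finset.mem_univ i)
    have : ‖V i x‖ = 0 := by nlinarith [norm_nonneg (V i x)]
    simpa using this
  constructor
  · -- forward direction
    rintro ⟨x, hx0, hx⟩
    by_cases h0 : CFC.rpow P t x = 0
    · -- then `P x = 0`, all eigenvalues vanish, and `x` itself works
      have hPx : P x = 0 := by
        rcases eq_or_lt_of_le ht0 with h | h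
        · rw [← h, rpow_zero' P hPpos, ContinuousLinearMap.one_apply] at h0
          exact absurd h0 hx0
        · exact eq_zero_of_rpow_apply_eq_zero P hPpos h ht1 h0
      have hlam0 : ∀ i, lam i = 0 := by
        intro i
        have h1 := hx i
        rw [hT_apply i, hPx, map_zero] at h1
        rcases smul_eq_zero.mp h1.symm with h | h
        · exact h
        · exact absurd h hx0
      refine ⟨x, hx0, fun i => ?_⟩
      have hV1t : V i (CFC.rpow P (1 - t) x) = 0 := by
        rcases lt_or_eq_of_le ht1 with h | h
        · rw [rpow_apply_eq_zero' P hPpos (by linarith) hPx, map_zero]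
        · rw [h, sub_self, rpow_zero' P hPpos, ContinuousLinearMap.one_apply]
          exact hVker x hPx i
      simp only [ContinuousLinearMap.mul_apply]
      rw [hV1t, map_zero, hlam0 i, zero_smul]
    · -- `y = P^t x` works
      refine ⟨CFC.rpow P t x, h0, fun i => ?_⟩
      simp only [ContinuousLinearMap.mul_apply]
      rw [hQQ x, ← hT_apply i x, hx i, map_smul]
  · -- reverse direction
    rintro ⟨y, hy0, hy⟩
    set w := CFC.rpow P (1 - t) y with hw_def
    have hy' : ∀ i, CFC.rpow P t (V i w) = lam i • y := fun i => by
      have := hy i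
      simpa only [ContinuousLinearMap.mul_apply] using this
    have key : ∀ j, P (V j w) = lam j • w := fun j => by
      have := congrArg (fun z => CFC.rpow P (1 - t) z) (hy' j)
      simpa only [hQQ, map_smul] using this
    by_cases hall : ∀ i, lam i = 0
    · -- all eigenvalues vanish: `ker P` must be nontrivial
      by_cases hker : ∃ x : H, x ≠ 0 ∧ P x = 0
      · obtain ⟨x, hx0, hxP⟩ := hker
        exact ⟨x, hx0, fun i => by rw [hT_apply i, hxP, map_zero, hall i, zero_smul]⟩
      · exfalso
        push_neg at hker
        have Pinj : ∀ x : H, P x = 0 → x = 0 := by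
          intro x h
          by_contra h0
          exact hker x h0 h
        have hVw : ∀ j, V j w = 0 := fun j =>
          Pinj _ (by rw [key j, hall j, zero_smul])
        have hsumw : (∑ j, star (V j) * V j) w = 0 := by
          rw [ContinuousLinearMap.sum_apply]
          refine Finset.sum_eq_zero fun j _ => ?_
          rw [ContinuousLinearMap.mul_apply, hVw j, map_zero]
        have hprojw : Submodule.orthogonalProjectionOnto (LinearMap.ker (P : H →ₗ[ℂ] H))ᗮ w = 0 := by
          rw [hproj] at hsumw
          exact Submodule.coe_eq_zero.mp hsumw
        have hmemw : w ∈ ((LinearMap.ker (P : H →ₗ[ℂ] H))ᗮ)ᗮ :=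
          Submodule.orthogonalProjectionOnto_eq_zero_iff.mp hprojw
        have hkerbot : LinearMap.ker (P : H →ₗ[ℂ] H) = ⊥ := by
          rw [eq_bot_iff]
          intro x hx
          exact Pinj x (LinearMap.mem_ker.mp hx)
        rw [hkerbot, Submodule.bot_orthogonal_eq_top, Submodule.top_orthogonal_eq_bot,
          Submodule.mem_bot] at hmemw
        -- now `w = 0`, so `y = 0`, contradiction
        rcases lt_or_eq_of_le ht1 with h | h
        · exact hy0 (Pinj y (eq_zero_of_rpow_apply_eq_zero P hPpos (by linarith)
            (by linarith) hmemw))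
        · rw [hw_def, h, sub_self, rpow_zero' P hPpos,
            ContinuousLinearMap.one_apply] at hmemw
          exact hy0 hmemw
    · -- some eigenvalue is nonzero
      push_neg at hall
      obtain ⟨i0, hi0⟩ := hall
      -- `w` is in the range of `P`
      obtain ⟨z, hz⟩ : ∃ z : H, w = P z := by
        rcases eq_or_lt_of_le ht0 with h | h
        · exact ⟨y, by rw [hw_def, ← h, sub_zero, rpow_one' P hPpos]⟩
        · refine ⟨(lam i0)⁻¹ • V i0 w, ?_⟩
          have hyw : y = (lam i0)⁻¹ • CFC.rpow P t (V i0 w) := by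
            rw [hy' i0, smul_smul, inv_mul_cancel₀ hi0, one_smul]
          rw [map_smul]
          conv_lhs => rw [hw_def, hyw, map_smul, hQQ]
      refine ⟨V i0 w, ?_, fun j => ?_⟩
      · intro hVi0
        have := hy' i0
        rw [hVi0, map_zero] at this
        rcases smul_eq_zero.mp this.symm with h | h
        · exact hi0 h
        · exact hy0 h
      · calc T j (V i0 w) = T j (T i0 z) := by rw [hz, ← hT_apply i0]
          _ = (T j * T i0) z := rfl
          _ = (T i0 * T j) z := by rw [hcomm j i0]
          _ = T i0 (T j z) := rfl
          _ = V i0 (P (V j (P z))) := by rw [hT_apply i0, hT_apply j]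
          _ = V i0 (lam j • w) := by rw [← hz, key j]
          _ = lam j • V i0 w := by rw [map_smul]
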